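/- Let γ > 1. For the 1D compressible Euler equations with conservative state U = (ρ, m, E), pressure p(U) = (γ−1)(E − m²/(2ρ)), sound speed c(U) = √(γ p(U)/ρ), and flux F(U) = (m, m²/ρ + p(U), (m/ρ)(E + p(U))), the following holds: if U_L and U_R both belong to the invariant domain G = {(ρ, m, E) : ρ > 0, p(U) > 0}, and λ ≥ max{|m_L/ρ_L| + c(U_L), |m_R/ρ_R| + c(U_R)}, then (U_L + U_R)/2 − (F(U_R) − F(U_L))/(2λ) ∈ G. -/

import Mathlib

/-- Pressure of a 1D Euler state `U = (ρ, m, E)`: `p = (γ−1)(E − m²/(2ρ))`. -/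
noncomputable def eulerPressure (γ : ℝ) (U : ℝ × ℝ × ℝ) : ℝ :=
  (γ - 1) * (U.2.2 - U.2.1 ^ 2 / (2 * U.1))

/-- Sound speed of a 1D Euler state: `c = √(γp/ρ)`. -/
noncomputable def eulerSoundSpeed (γ : ℝ) (U : ℝ × ℝ × ℝ) : ℝ :=
  Real.sqrt (γ * eulerPressure γ U / U.1)

/-- Flux of the 1D compressible Euler equations:
`F(U) = (m, m²/ρ + p, (m/ρ)(E + p))`. -/
noncomputable def eulerFlux (γ : ℝ) (U : ℝ × ℝ × ℝ) : ℝ × ℝ × ℝ :=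
  (U.2.1, U.2.1 ^ 2 / U.1 + eulerPressure γ U,
    (U.2.1 / U.1) * (U.2.2 + eulerPressure γ U))

/-- Invariant domain of the Euler equations: positive density and pressure. -/
noncomputable def eulerInvariantDomain (γ : ℝ) : Set (ℝ × ℝ × ℝ) :=
  {U | 0 < U.1 ∧ 0 < eulerPressure γ U}

lemma euler_pos_aux (γ Q X P : ℝ) (hγ : 1 < γ) (hQ : 0 < Q) (hP : 0 < P)
    (hrel : (γ - 1) * Q = 2 * P) (hX : γ * P ≤ X) : P ^ 2 < Q * X := by
  nlinarith [mul_le_mul_of_nonneg_left hX hQ.le, mul_pos hP hP, sq_nonneg P]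

lemma euler_key_abstract (γ ρ m E lam s p c : ℝ) (hγ : 1 < γ) (hρ : 0 < ρ)
    (hs : s = 1 ∨ s = -1) (hp : 0 < p) (hc : 0 < c)
    (hc2 : c ^ 2 = γ * p / ρ)
    (hrel : (γ - 1) * (2 * ρ * E - m ^ 2) = 2 * ρ * p)
    (hlam : |m / ρ| + c ≤ lam) :
    0 < ρ + s * m / lam ∧
    (m + s * ((m ^ 2 / ρ + p) / lam)) ^ 2
      < 2 * (ρ + s * m / lam) * (E + s * ((m / ρ) * (E + p) / lam)) := by
  have hlam0 : 0 < lam :=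
    lt_of_lt_of_le (by linarith [abs_nonneg (m / ρ)]) hlam
  have hsv : -|m / ρ| ≤ s * (m / ρ) := by
    rcases hs with rfl | rfl
    · simpa using neg_abs_le (m / ρ)
    · simpa using le_abs_self (m / ρ)
  have hkey : c ≤ lam + s * (m / ρ) := by linarith
  have hkey0 : 0 < lam + s * (m / ρ) := lt_of_lt_of_le hc hkey
  have hρ' : 0 < ρ + s * m / lam := by
    have h : ρ + s * m / lam = ρ * (lam + s * (m / ρ)) / lam := by
      field_simp
    rw [h]; exact div_pos (mul_pos hρ hkey0) hlam0
  refine ⟨hρ', ?_⟩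
  have hQ : 0 < 2 * ρ * E - m ^ 2 := by nlinarith [mul_pos hρ hp]
  have hid : 2 * (ρ + s * m / lam) * (E + s * ((m / ρ) * (E + p) / lam))
      - (m + s * ((m ^ 2 / ρ + p) / lam)) ^ 2
      = ((2 * ρ * E - m ^ 2) * (ρ * lam + s * m) ^ 2 - p ^ 2 * ρ ^ 2)
          / (ρ ^ 2 * lam ^ 2) := by
    rcases hs with rfl | rfl <;> field_simp <;> ring
  have h1 : ρ * c ≤ ρ * lam + s * m := by
    have h : ρ * (lam + s * (m / ρ)) = ρ * lam + s * m := by field_simp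
    nlinarith [mul_le_mul_of_nonneg_left hkey hρ.le]
  have h2 : (ρ * c) ^ 2 ≤ (ρ * lam + s * m) ^ 2 := by
    have h0 : 0 ≤ ρ * c := by positivity
    nlinarith
  have h3 : (ρ * c) ^ 2 = ρ * γ * p := by
    have hρ0 : ρ ≠ 0 := ne_of_gt hρ
    field_simp [mul_pow, hc2]; rw [hc2]; field_simp
  have hX : γ * (ρ * p) ≤ (ρ * lam + s * m) ^ 2 := by
    calc γ * (ρ * p) = (ρ * c) ^ 2 := by rw [h3]; ring
    _ ≤ (ρ * lam + s * m) ^ 2 := h2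
  have hrel' : (γ - 1) * (2 * ρ * E - m ^ 2) = 2 * (ρ * p) := by linarith [hrel]
  have hnum0 : (ρ * p) ^ 2 < (2 * ρ * E - m ^ 2) * (ρ * lam + s * m) ^ 2 :=
    euler_pos_aux γ (2 * ρ * E - m ^ 2) ((ρ * lam + s * m) ^ 2) (ρ * p) hγ hQ
      (mul_pos hρ hp) hrel' hX
  have hnum : 0 < (2 * ρ * E - m ^ 2) * (ρ * lam + s * m) ^ 2 - p ^ 2 * ρ ^ 2 := by
    have he : p ^ 2 * ρ ^ 2 = (ρ * p) ^ 2 := by ring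
    linarith [hnum0, he.le]
  have hpos : 0 < ((2 * ρ * E - m ^ 2) * (ρ * lam + s * m) ^ 2 - p ^ 2 * ρ ^ 2)
      / (ρ ^ 2 * lam ^ 2) := div_pos hnum (by positivity)
  linarith [hid, hpos]

lemma euler_key (γ ρ m E lam s : ℝ) (hγ : 1 < γ) (hρ : 0 < ρ)
    (hs : s = 1 ∨ s = -1)
    (hp : 0 < (γ - 1) * (E - m ^ 2 / (2 * ρ)))
    (hlam : |m / ρ| + Real.sqrt (γ * ((γ - 1) * (E - m ^ 2 / (2 * ρ))) / ρ) ≤ lam) :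
    0 < ρ + s * m / lam ∧
    (m + s * ((m ^ 2 / ρ + (γ - 1) * (E - m ^ 2 / (2 * ρ))) / lam)) ^ 2
      < 2 * (ρ + s * m / lam)
        * (E + s * ((m / ρ) * (E + (γ - 1) * (E - m ^ 2 / (2 * ρ))) / lam)) := by
  have hcpos : 0 < γ * ((γ - 1) * (E - m ^ 2 / (2 * ρ))) / ρ := by positivity
  refine euler_key_abstract γ ρ m E lam s _ _ hγ hρ hs hp
    (Real.sqrt_pos.2 hcpos) (Real.sq_sqrt hcpos.le) ?_ hlam
  have hρ0 : ρ ≠ 0 := ne_of_gt hρ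
  field_simp

lemma euler_mid (rA mA EA rB mB EB : ℝ) (hrA : 0 < rA) (hrB : 0 < rB)
    (hA : mA ^ 2 < 2 * rA * EA) (hB : mB ^ 2 < 2 * rB * EB) :
    0 < (rA + rB) / 2 ∧ ((mA + mB) / 2) ^ 2 < 2 * ((rA + rB) / 2) * ((EA + EB) / 2) := by
  have hEA : 0 < EA := by nlinarith [sq_nonneg mA]
  have hEB : 0 < EB := by nlinarith [sq_nonneg mB]
  constructor
  · linarith
  · nlinarith [sq_nonneg (rA * EB - rB * EA), mul_pos (sub_pos.2 hA) (sub_pos.2 hB),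
      mul_pos hrA hEB, mul_pos hrB hEA, sq_nonneg (mA - mB), sq_nonneg (mA + mB)]

theorem euler_lax_friedrichs_splitting
    (γ : ℝ) (hγ : 1 < γ) (UL UR : ℝ × ℝ × ℝ)
    (hUL : UL ∈ eulerInvariantDomain γ) (hUR : UR ∈ eulerInvariantDomain γ)
    (lam : ℝ)
    (hlam : lam ≥ max (|UL.2.1 / UL.1| + eulerSoundSpeed γ UL)
      (|UR.2.1 / UR.1| + eulerSoundSpeed γ UR)) :
    (1 / 2 : ℝ) • (UL + UR) - (1 / (2 * lam)) • (eulerFlux γ UR - eulerFlux γ UL) ∈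
      eulerInvariantDomain γ := by
  obtain ⟨rL, mL, EL⟩ := UL
  obtain ⟨rR, mR, ER⟩ := UR
  obtain ⟨hrL, hpL⟩ := hUL
  obtain ⟨hrR, hpR⟩ := hUR
  simp only [eulerPressure] at hpL hpR
  simp only [eulerSoundSpeed, eulerPressure] at hlam
  have hlamL := le_trans (le_max_left _ _) hlam
  have hlamR := le_trans (le_max_right _ _) hlam
  have hA := euler_key γ rL mL EL lam 1 hγ hrL (Or.inl rfl) hpL hlamL
  have hB := euler_key γ rR mR ER lam (-1) hγ hrR (Or.inr rfl) hpR hlamR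
  have hlam0 : 0 < lam := by
    have : (0:ℝ) < |mL / rL| + Real.sqrt (γ * ((γ - 1) * (EL - mL ^ 2 / (2 * rL))) / rL) := by
      have : (0:ℝ) < Real.sqrt (γ * ((γ - 1) * (EL - mL ^ 2 / (2 * rL))) / rL) :=
        Real.sqrt_pos.2 (by positivity)
      linarith [abs_nonneg (mL / rL)]
    linarith
  have hmid := euler_mid _ _ _ _ _ _ hA.1 hB.1 hA.2 hB.2
  simp only [eulerInvariantDomain, eulerFlux, eulerPressure, Set.mem_setOf_eq,
    Prod.mk_add_mk, Prod.smul_mk, Prod.mk_sub_mk, smul_eq_mul]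
  have hlamne : lam ≠ 0 := ne_of_gt hlam0
  have e1 : 1 / 2 * (rL + rR) - 1 / (2 * lam) * (mR - mL)
      = ((rL + 1 * mL / lam) + (rR + -1 * mR / lam)) / 2 := by field_simp; ring
  have e2 : 1 / 2 * (mL + mR) - 1 / (2 * lam)
        * ((mR ^ 2 / rR + (γ - 1) * (ER - mR ^ 2 / (2 * rR)))
          - (mL ^ 2 / rL + (γ - 1) * (EL - mL ^ 2 / (2 * rL))))
      = ((mL + 1 * ((mL ^ 2 / rL + (γ - 1) * (EL - mL ^ 2 / (2 * rL))) / lam))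
        + (mR + -1 * ((mR ^ 2 / rR + (γ - 1) * (ER - mR ^ 2 / (2 * rR))) / lam))) / 2 := by
    field_simp; ring
  have e3 : 1 / 2 * (EL + ER) - 1 / (2 * lam)
        * ((mR / rR) * (ER + (γ - 1) * (ER - mR ^ 2 / (2 * rR)))
          - (mL / rL) * (EL + (γ - 1) * (EL - mL ^ 2 / (2 * rL))))
      = ((EL + 1 * ((mL / rL) * (EL + (γ - 1) * (EL - mL ^ 2 / (2 * rL))) / lam))
        + (ER + -1 * ((mR / rR) * (ER + (γ - 1) * (ER - mR ^ 2 / (2 * rR))) / lam))) / 2 := by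
    field_simp; ring
  rw [e1, e2, e3]
  obtain ⟨hr, hq⟩ := hmid
  refine ⟨hr, ?_⟩
  have hx : 0 < ((EL + 1 * ((mL / rL) * (EL + (γ - 1) * (EL - mL ^ 2 / (2 * rL))) / lam))
        + (ER + -1 * ((mR / rR) * (ER + (γ - 1) * (ER - mR ^ 2 / (2 * rR))) / lam))) / 2
      - (((mL + 1 * ((mL ^ 2 / rL + (γ - 1) * (EL - mL ^ 2 / (2 * rL))) / lam))
        + (mR + -1 * ((mR ^ 2 / rR + (γ - 1) * (ER - mR ^ 2 / (2 * rR))) / lam))) / 2) ^ 2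
      / (2 * (((rL + 1 * mL / lam) + (rR + -1 * mR / lam)) / 2)) := by
    rw [sub_pos, div_lt_iff₀ (by linarith)]
    linarith [hq]
  have hgpos : (0:ℝ) < γ - 1 := by linarith
  exact mul_pos hgpos (by linarith [hx])
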